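/- Let $\mathcal{X} \subset \mathbb{R}^d$ be a compact convex set whose span is all of $\mathbb{R}^d$, let $H$ be a symmetric positive definite $d \times d$ real matrix with $E := \{x : x^\top H x \le 1\}$, and suppose $E \subseteq \mathrm{conv}(\mathcal{X} \cup (-\mathcal{X}))$. Define the regularizer $\phi(x) := \tfrac{1}{2} x^\top H x$ and its Bregman divergence $D_\phi(u,v) := \phi(u) - \phi(v) - \langle \nabla\phi(v), u - v\rangle = \tfrac{1}{2}(u-v)^\top H (u-v)$. Then $\phi$ is $1$-strongly convex with respect to $\|\cdot\|_{\mathcal{X}}$: for all $u, v \in \mathbb{R}^d$, $D_\phi(u,v) \ge \tfrac{1}{2}\|u - v\|_{\mathcal{X}}^2$. -/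

import Mathlib

open Matrix

/-- The "dual" norm tailored to the action set `X`:
`‖z‖_{*,X} = max_{x ∈ X} |⟨x, z⟩|`. -/
noncomputable def dualNormX {d : ℕ} (X : Set (Fin d → ℝ)) (z : Fin d → ℝ) : ℝ :=
  sSup ((fun x => |x ⬝ᵥ z|) '' X)

/-- The "primal" norm tailored to the action set `X`:
`‖z‖_X = max_{y : ‖y‖_{*,X} ≤ 1} ⟨y, z⟩`. -/
noncomputable def primalNormX {d : ℕ} (X : Set (Fin d → ℝ)) (z : Fin d → ℝ) : ℝ :=
  sSup ((fun y => y ⬝ᵥ z) '' {y | dualNormX X y ≤ 1})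

/-- The regularizer `φ(x) = ½ xᵀ H x` is `1`-strongly convex with respect to
`‖·‖_X`: its Bregman divergence `D_φ(u,v) = ½ (u-v)ᵀ H (u-v)` satisfies
`D_φ(u,v) ≥ ½ ‖u-v‖_X²`, provided `E = {x | xᵀ H x ≤ 1} ⊆ conv(X ∪ -X)`. -/
theorem stmt_8 {d : ℕ} (X : Set (Fin d → ℝ)) (hXc : IsCompact X) (hXconv : Convex ℝ X)
    (hspan : Submodule.span ℝ X = ⊤)
    (H : Matrix (Fin d) (Fin d) ℝ) (hsymm : H.IsSymm) (hpos : H.PosDef)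
    (hEK : {x : Fin d → ℝ | x ⬝ᵥ H *ᵥ x ≤ 1} ⊆ convexHull ℝ (X ∪ -X)) :
    ∀ u v : Fin d → ℝ,
      (1 / 2 : ℝ) * ((u - v) ⬝ᵥ H *ᵥ (u - v)) ≥
        (1 / 2 : ℝ) * (primalNormX X (u - v)) ^ 2 := by
  intro u v
  set z : Fin d → ℝ := u - v with hzdef
  set q : ℝ := z ⬝ᵥ H *ᵥ z with hqdef
  have hq0 : 0 ≤ q := by
    have := hpos.posSemidef.dotProduct_mulVec_nonneg z
    simpa using this
  -- The key bound on elements of the defining set of the primal norm.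
  have hbound : ∀ y : Fin d → ℝ, dualNormX X y ≤ 1 → y ⬝ᵥ z ≤ Real.sqrt q := by
    intro y hy
    by_cases hz0 : z = 0
    · simp [hz0, Real.sqrt_nonneg]
    · have hqpos : 0 < q := by
        have := hpos.dotProduct_mulVec_pos hz0
        simpa [hqdef] using this
      -- Every point of the convex hull pairs with y with absolute value ≤ 1.
      have habs : ∀ w ∈ convexHull ℝ (X ∪ -X), |w ⬝ᵥ y| ≤ 1 := by
        have hTconv : Convex ℝ {w : Fin d → ℝ | |w ⬝ᵥ y| ≤ 1} := by
          intro w1 h1 w2 h2 a b ha hb hab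
          simp only [Set.mem_setOf_eq] at h1 h2 ⊢
          have : (a • w1 + b • w2) ⬝ᵥ y = a * (w1 ⬝ᵥ y) + b * (w2 ⬝ᵥ y) := by
            simp [add_dotProduct, smul_dotProduct, smul_eq_mul]
          rw [this]
          calc |a * (w1 ⬝ᵥ y) + b * (w2 ⬝ᵥ y)|
              ≤ |a * (w1 ⬝ᵥ y)| + |b * (w2 ⬝ᵥ y)| := abs_add_le _ _
            _ = a * |w1 ⬝ᵥ y| + b * |w2 ⬝ᵥ y| := by
                rw [abs_mul, abs_mul, abs_of_nonneg ha, abs_of_nonneg hb]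
            _ ≤ a * 1 + b * 1 := by
                gcongr
            _ = 1 := by linarith
        have hbdd : BddAbove ((fun x => |x ⬝ᵥ y|) '' X) := by
          have hcont : Continuous fun x : Fin d → ℝ => |x ⬝ᵥ y| := by
            apply Continuous.abs
            unfold dotProduct
            exact continuous_finset_sum _ fun i _ =>
              (continuous_apply i).mul continuous_const
          exact (hXc.image hcont).bddAbove
        have hXsub : X ⊆ {w : Fin d → ℝ | |w ⬝ᵥ y| ≤ 1} := by
          intro x hx
          have : |x ⬝ᵥ y| ≤ dualNormX X y := le_csSup hbdd ⟨x, hx, rfl⟩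
          exact this.trans hy
        have hsub : X ∪ -X ⊆ {w : Fin d → ℝ | |w ⬝ᵥ y| ≤ 1} := by
          rintro w (hw | hw)
          · exact hXsub hw
          · rcases Set.mem_neg.mp hw with hw'
            have : |(-w) ⬝ᵥ y| ≤ 1 := hXsub hw'
            simpa [neg_dotProduct, abs_neg] using this
        exact fun w hw => convexHull_min hsub hTconv hw
      -- Test with the point e = z / √q which lies in the ellipsoid E.
      set c : ℝ := (Real.sqrt q)⁻¹ with hcdef
      have hc0 : 0 < c := inv_pos.mpr (Real.sqrt_pos.mpr hqpos)
      have heE : (c • z) ⬝ᵥ H *ᵥ (c • z) ≤ 1 := by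
        have : (c • z) ⬝ᵥ H *ᵥ (c • z) = c * (c * q) := by
          rw [Matrix.mulVec_smul, smul_dotProduct, dotProduct_smul]
          simp [hqdef, smul_eq_mul, mul_comm, mul_assoc]
        rw [this, hcdef]
        have hs : Real.sqrt q * Real.sqrt q = q := Real.mul_self_sqrt hq0
        rw [mul_comm ((Real.sqrt q)⁻¹) ((Real.sqrt q)⁻¹ * q)]
        field_simp
        exact (Real.sq_sqrt hq0).ge
      have h1 : |(c • z) ⬝ᵥ y| ≤ 1 := habs _ (hEK heE)
      have h2 : |(c • z) ⬝ᵥ y| = c * |z ⬝ᵥ y| := by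
        rw [smul_dotProduct, smul_eq_mul, abs_mul, abs_of_pos hc0]
      rw [h2] at h1
      have h3 : |z ⬝ᵥ y| ≤ Real.sqrt q := by
        have hsq : 0 < Real.sqrt q := Real.sqrt_pos.mpr hqpos
        rw [hcdef] at h1
        calc |z ⬝ᵥ y| = Real.sqrt q * ((Real.sqrt q)⁻¹ * |z ⬝ᵥ y|) := by
              field_simp
          _ ≤ Real.sqrt q * 1 := by
              exact mul_le_mul_of_nonneg_left h1 hsq.le
          _ = Real.sqrt q := mul_one _
      calc y ⬝ᵥ z = z ⬝ᵥ y := dotProduct_comm _ _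
        _ ≤ |z ⬝ᵥ y| := le_abs_self _
        _ ≤ Real.sqrt q := h3
  -- The primal norm is at most √q.
  have hsup : primalNormX X z ≤ Real.sqrt q := by
    apply Real.sSup_le
    · rintro a ⟨y, hy, rfl⟩
      exact hbound y hy
    · exact Real.sqrt_nonneg q
  -- The primal norm is nonnegative (0 is attained at y = 0).
  have hdual0 : dualNormX X (0 : Fin d → ℝ) ≤ 1 := by
    apply Real.sSup_le
    · rintro a ⟨x, hx, rfl⟩
      simp
    · norm_num
  have hbdd2 : BddAbove ((fun y => y ⬝ᵥ z) '' {y | dualNormX X y ≤ 1}) := by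
    refine ⟨Real.sqrt q, ?_⟩
    rintro a ⟨y, hy, rfl⟩
    exact hbound y hy
  have hp0 : 0 ≤ primalNormX X z := by
    have : (0 : ℝ) ∈ ((fun y => y ⬝ᵥ z) '' {y | dualNormX X y ≤ 1}) := by
      exact ⟨0, hdual0, zero_dotProduct z⟩
    exact le_csSup hbdd2 this
  have hfinal : (primalNormX X z) ^ 2 ≤ q := by
    calc (primalNormX X z) ^ 2 ≤ (Real.sqrt q) ^ 2 := by
          exact pow_le_pow_left₀ hp0 hsup 2
      _ = q := Real.sq_sqrt hq0
  linarith
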